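/- arXiv:2102.01794 — 5 statements merged into one kernel-verified Lean document; each statement's English description precedes it below -/
import Mathlib

section
/- Let x : ℕ → Bool, let u be an integer, and let g be a natural number. Then: (1) φ(x) < u / 2^g if and only if there exists a natural number k such that ∑_{i < g+k} x_i / 2^(i+1) < u / 2^g - 1 / 2^(g+k); and (2) φ(x) > u / 2^g if and only if there exists a natural number k such that ∑_{i < g+k} x_i / 2^(i+1) > u / 2^g. Here ∑_{i < N} denotes the finite sum over i ∈ {0, 1, ..., N-1}, and φ is the Cantor map. -/
/-- The Cantor map sending a binary sequence to a real number in `[0,1]`. -/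
noncomputable def cantorMap (b : ℕ → Bool) : ℝ :=
  ∑' i : ℕ, (if b i then (1 : ℝ) else 0) / 2 ^ (i + 1)

theorem cantorMap_lt_gt_dyadic_iff (x : ℕ → Bool) (u : ℤ) (g : ℕ) :
    (cantorMap x < (u : ℝ) / 2 ^ g ↔
      ∃ k : ℕ, ∑ i ∈ Finset.range (g + k), (if x i then (1 : ℝ) else 0) / 2 ^ (i + 1)
        < (u : ℝ) / 2 ^ g - 1 / 2 ^ (g + k)) ∧
    (cantorMap x > (u : ℝ) / 2 ^ g ↔
      ∃ k : ℕ, ∑ i ∈ Finset.range (g + k), (if x i then (1 : ℝ) else 0) / 2 ^ (i + 1)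
        > (u : ℝ) / 2 ^ g) := by
  set f : ℕ → ℝ := fun i => (if x i then (1 : ℝ) else 0) / 2 ^ (i + 1) with hf
  set q : ℝ := (u : ℝ) / 2 ^ g with hq
  have hnn : ∀ i, 0 ≤ f i := by
    intro i; simp only [hf]; positivity
  have hle : ∀ i, f i ≤ (1 / 2 : ℝ) ^ (i + 1) := by
    intro i
    have h2 : (1 / 2 : ℝ) ^ (i + 1) = 1 / 2 ^ (i + 1) := by rw [div_pow, one_pow]
    rw [h2]; simp only [hf]
    split
    · exact le_rfl
    · rw [zero_div]; positivity
  have hgsum : Summable fun i : ℕ => (1 / 2 : ℝ) ^ (i + 1) :=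
    (summable_nat_add_iff 1).2 summable_geometric_two
  have hsum : Summable f := Summable.of_nonneg_of_le hnn hle hgsum
  have htail : ∀ N : ℕ, (∑' i, f (i + N)) ≤ 1 / 2 ^ N := by
    intro N
    have h1 : (∑' i, f (i + N)) ≤ ∑' i : ℕ, (1 / 2 : ℝ) ^ (i + N + 1) := by
      apply Summable.tsum_le_tsum (fun i => hle (i + N)) ((summable_nat_add_iff N).2 hsum)
      exact (summable_nat_add_iff (N + 1)).2 summable_geometric_two |>.congr
        (fun i => by ring_nf)
    have h2 : (∑' i : ℕ, (1 / 2 : ℝ) ^ (i + N + 1)) = 1 / 2 ^ N := by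
      have : ∀ i : ℕ, (1 / 2 : ℝ) ^ (i + N + 1) = (1 / 2) ^ i * (1 / 2) ^ (N + 1) := by
        intro i; rw [← pow_add]; ring_nf
      rw [tsum_congr this, tsum_mul_right, tsum_geometric_two]
      rw [div_pow, one_pow, pow_succ]
      ring
    linarith
  have hdecomp : ∀ N : ℕ, cantorMap x = (∑ i ∈ Finset.range N, f i) + ∑' i, f (i + N) := by
    intro N
    exact (Summable.sum_add_tsum_nat_add N hsum).symm
  have hpartial_le : ∀ N : ℕ, (∑ i ∈ Finset.range N, f i) ≤ cantorMap x := by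
    intro N
    exact Summable.sum_le_tsum _ (fun i _ => hnn i) hsum
  have htends : Filter.Tendsto (fun N => ∑ i ∈ Finset.range N, f i)
      Filter.atTop (nhds (cantorMap x)) := hsum.hasSum.tendsto_sum_nat
  constructor
  · constructor
    · intro h
      have htends2 : Filter.Tendsto (fun N => (∑ i ∈ Finset.range N, f i) + 1 / 2 ^ N)
          Filter.atTop (nhds (cantorMap x + 0)) := by
        apply htends.add
        have : Filter.Tendsto (fun N : ℕ => (1 / 2 : ℝ) ^ N) Filter.atTop (nhds 0) := by
          apply tendsto_pow_atTop_nhds_zero_of_lt_one <;> norm_num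
        exact this.congr (fun N => by rw [div_pow, one_pow])
      rw [add_zero] at htends2
      have hev := htends2.eventually_lt_const h
      rw [Filter.eventually_atTop] at hev
      obtain ⟨N₀, hN₀⟩ := hev
      refine ⟨N₀, ?_⟩
      have := hN₀ (g + N₀) (Nat.le_add_left _ _)
      linarith
    · rintro ⟨k, hk⟩
      have := hdecomp (g + k)
      have := htail (g + k)
      linarith
  · constructor
    · intro h
      have hev := htends.eventually_const_lt h
      rw [Filter.eventually_atTop] at hev
      obtain ⟨N₀, hN₀⟩ := hev
      exact ⟨N₀, hN₀ (g + N₀) (Nat.le_add_left _ _)⟩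
    · rintro ⟨k, hk⟩
      exact lt_of_lt_of_le hk (hpartial_le (g + k))
end

section
/- There exists a continuous surjection from ℤ₂ onto the Hilbert cube ℕ → [0,1]. (This is the topological form of the statement that there is an injective frame homomorphism from the Hilbert cube frame into the frame of ℤ₂.) -/
lemma aux_bit0_toNat (k : ℕ) : (k.testBit 0).toNat = k % 2 := by
  rw [Nat.testBit_zero]
  rcases Nat.even_or_odd k with he | ho
  · have : k % 2 = 0 := Nat.even_iff.mp he
    simp [this]
  · have : k % 2 = 1 := Nat.odd_iff.mp ho
    simp [this]

lemma aux_sum_testBit : ∀ N k : ℕ, k < 2 ^ N →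
    ∑ i ∈ Finset.range N, (k.testBit i).toNat * 2 ^ i = k := by
  intro N
  induction N with
  | zero => intro k hk; interval_cases k <;> simp
  | succ N ih =>
    intro k hk
    rw [Finset.sum_range_succ']
    have h2 : k / 2 < 2 ^ N := by
      rw [Nat.div_lt_iff_lt_mul (by norm_num)]
      calc k < 2 ^ (N + 1) := hk
        _ = 2 ^ N * 2 := by ring
    have := ih (k / 2) h2
    have hsum : ∑ i ∈ Finset.range N, (k.testBit (i + 1)).toNat * 2 ^ (i + 1)
        = 2 * ∑ i ∈ Finset.range N, ((k / 2).testBit i).toNat * 2 ^ i := by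
      rw [Finset.mul_sum]
      refine Finset.sum_congr rfl fun i _ => ?_
      rw [Nat.testBit_succ]
      ring
    rw [hsum, this, aux_bit0_toNat]
    omega

-- direction 2: testBit of a bit-sum
lemma aux_testBit_sum (a : ℕ → Bool) : ∀ N k : ℕ, k < N →
    (∑ i ∈ Finset.range N, (a i).toNat * 2 ^ i).testBit k = a k := by
  intro N
  induction N with
  | zero => intro k hk; omega
  | succ N ih =>
    intro k hk
    have hlt : ∑ i ∈ Finset.range N, (a i).toNat * 2 ^ i < 2 ^ N := by
      calc ∑ i ∈ Finset.range N, (a i).toNat * 2 ^ i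
          ≤ ∑ i ∈ Finset.range N, 1 * 2 ^ i := by
            refine Finset.sum_le_sum fun i _ => ?_
            exact Nat.mul_le_mul_right _ (Bool.toNat_le _)
        _ = 2 ^ N - 1 := by
            simp only [one_mul]
            rw [Nat.geomSum_eq (le_refl 2)]
            simp
        _ < 2 ^ N := by have := Nat.one_le_two_pow (n := N); omega
    rw [Finset.sum_range_succ]
    rcases Nat.lt_or_ge k N with hkN | hkN
    · have ihk := ih k hkN
      rw [Nat.testBit_eq_decide_div_mod_eq] at ihk ⊢
      have hNk : 2 ^ N = 2 ^ k * (2 * 2 ^ (N - k - 1)) := by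
        rw [← pow_succ', ← pow_add]
        congr 1
        omega
      have hterm : (a N).toNat * 2 ^ N = 2 ^ k * ((a N).toNat * (2 * 2 ^ (N - k - 1))) := by
        rw [hNk]; ring
      rw [hterm, Nat.add_mul_div_left _ _ (Nat.two_pow_pos k)]
      rw [← ihk]
      congr 1
      have h2 : (a N).toNat * (2 * 2 ^ (N - k - 1)) = 2 * ((a N).toNat * 2 ^ (N - k - 1)) := by
        ring
      rw [h2, Nat.add_mul_mod_self_left]
    · have hk' : k = N := by omega
      subst hk'
      rw [Nat.testBit_eq_decide_div_mod_eq]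
      have hdiv : (∑ i ∈ Finset.range k, (a i).toNat * 2 ^ i + (a k).toNat * 2 ^ k) / 2 ^ k
          = (a k).toNat := by
        rw [Nat.add_mul_div_right _ _ (Nat.two_pow_pos k),
          Nat.div_eq_of_lt hlt, zero_add]
      rw [hdiv]
      cases a k <;> simp

noncomputable def auxG (b : ℕ → Bool) : ℝ := ∑' i : ℕ, ((b i).toNat : ℝ) / 2 ^ (i + 1)

lemma auxG_term_le (b : ℕ → Bool) (i : ℕ) :
    ((b i).toNat : ℝ) / 2 ^ (i + 1) ≤ 1 / 2 / 2 ^ i := by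
  have h1 : ((b i).toNat : ℝ) ≤ 1 := by cases b i <;> norm_num
  have h2 : (0:ℝ) < 2 ^ (i+1) := by positivity
  rw [div_le_iff₀ h2]
  calc ((b i).toNat : ℝ) ≤ 1 := h1
    _ = 1 / 2 / 2 ^ i * 2 ^ (i+1) := by
        field_simp
        ring

lemma auxG_term_nonneg (b : ℕ → Bool) (i : ℕ) : (0:ℝ) ≤ ((b i).toNat : ℝ) / 2 ^ (i + 1) := by
  positivity

lemma aux_summable_half : Summable (fun i : ℕ => (1:ℝ) / 2 / 2 ^ i) := by
  simpa [div_eq_mul_inv, one_div] using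
    (summable_geometric_two.mul_left ((1:ℝ)/2))

lemma auxG_summable (b : ℕ → Bool) :
    Summable (fun i : ℕ => ((b i).toNat : ℝ) / 2 ^ (i + 1)) := by
  refine Summable.of_nonneg_of_le (auxG_term_nonneg b) (auxG_term_le b) aux_summable_half

lemma auxG_mem (b : ℕ → Bool) : auxG b ∈ Set.Icc (0:ℝ) 1 := by
  constructor
  · exact tsum_nonneg (auxG_term_nonneg b)
  · calc auxG b ≤ ∑' i : ℕ, (1:ℝ) / 2 / 2 ^ i :=
        (auxG_summable b).tsum_le_tsum (auxG_term_le b) aux_summable_half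
      _ = 1 := tsum_geometric_two' 1

lemma auxG_continuous : Continuous auxG := by
  refine continuous_tsum (u := fun i => (1:ℝ)/2/2^i) (fun i => ?_) aux_summable_half
    (fun i b => ?_)
  · exact (continuous_of_discreteTopology
      (f := fun x : Bool => ((x.toNat : ℝ) / 2 ^ (i + 1)))).comp (continuous_apply i)
  · rw [Real.norm_eq_abs, abs_of_nonneg (auxG_term_nonneg b i)]
    exact auxG_term_le b i



lemma auxG_dyadic (N k : ℕ) (hk : k < 2 ^ N) :
    auxG (fun i => if i < N then k.testBit (N - 1 - i) else false) = (k : ℝ) / 2 ^ N := by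
  have hzero : ∀ i ∉ Finset.range N,
      (((if i < N then k.testBit (N - 1 - i) else false).toNat : ℝ) / 2 ^ (i + 1)) = 0 := by
    intro i hi
    rw [Finset.mem_range] at hi
    simp [if_neg hi]
  rw [auxG, tsum_eq_sum hzero]
  have hterm : ∀ i ∈ Finset.range N,
      (((if i < N then k.testBit (N - 1 - i) else false).toNat : ℝ) / 2 ^ (i + 1))
        = (fun j => ((k.testBit j).toNat : ℝ) * 2 ^ j / 2 ^ N) (N - 1 - i) := by
    intro i hi
    rw [Finset.mem_range] at hi
    rw [if_pos hi]
    have h2 : (2:ℝ) ^ (N - 1 - i) * 2 ^ (i + 1) = 2 ^ N := by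
      rw [← pow_add]
      congr 1
      omega
    field_simp
    rw [mul_assoc, mul_comm ((2:ℝ) ^ (i + 1)), h2]
  rw [Finset.sum_congr rfl hterm,
    Finset.sum_range_reflect (fun j => ((k.testBit j).toNat : ℝ) * 2 ^ j / 2 ^ N) N]
  rw [← Finset.sum_div, ← Nat.cast_ofNat (n := 2)]
  norm_cast
  rw [aux_sum_testBit N k hk]

lemma auxG_one : auxG (fun _ => true) = 1 := by
  rw [auxG]
  have : ∀ i : ℕ, (((true : Bool).toNat : ℝ) / 2 ^ (i + 1)) = 1 / 2 / 2 ^ i := by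
    intro i
    rw [pow_succ]
    norm_num
    ring
  simp_rw [this]
  exact tsum_geometric_two' 1

noncomputable def auxg (b : ℕ → Bool) : Set.Icc (0:ℝ) 1 := ⟨auxG b, auxG_mem b⟩

lemma auxg_surjective : Function.Surjective auxg := by
  have hcont : Continuous auxg := auxG_continuous.subtype_mk _
  have hclosed : IsClosed (Set.range auxg) := (isCompact_range hcont).isClosed
  have hdense : Dense (Set.range auxg) := by
    intro x
    rw [Metric.mem_closure_iff]
    intro ε hε
    rcases eq_or_lt_of_le x.2.2 with h1 | h1
    · refine ⟨auxg (fun _ => true), Set.mem_range_self _, ?_⟩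
      have : x = auxg (fun _ => true) := by
        apply Subtype.ext
        rw [h1]
        exact (auxG_one).symm
      rw [← this]
      simpa using hε
    · obtain ⟨N, hN⟩ := exists_pow_lt_of_lt_one hε (by norm_num : (1:ℝ)/2 < 1)
      set r : ℝ := (x : ℝ)
      have hr0 : 0 ≤ r := x.2.1
      have h2N : (0:ℝ) < 2 ^ N := by positivity
      have hrN : r * 2 ^ N < 2 ^ N := by
        calc r * 2 ^ N < 1 * 2 ^ N := by exact mul_lt_mul_of_pos_right h1 h2N
          _ = 2 ^ N := one_mul _
      set kk : ℤ := ⌊r * 2 ^ N⌋ with hkk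
      have hkk0 : 0 ≤ kk := Int.floor_nonneg.mpr (by positivity)
      set k : ℕ := kk.toNat with hk
      have hkcast : (k : ℝ) = (kk : ℝ) := by
        rw [hk]; exact_mod_cast congrArg Int.cast (Int.toNat_of_nonneg hkk0)
      have hkle : (k : ℝ) ≤ r * 2 ^ N := by rw [hkcast]; exact Int.floor_le _
      have hklt : r * 2 ^ N < (k : ℝ) + 1 := by rw [hkcast]; exact Int.lt_floor_add_one _
      have hkN : k < 2 ^ N := by
        have : (k : ℝ) < (2 ^ N : ℕ) := by
          push_cast
          exact lt_of_le_of_lt hkle hrN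
        exact_mod_cast this
      refine ⟨auxg (fun i => if i < N then k.testBit (N - 1 - i) else false),
        Set.mem_range_self _, ?_⟩
      rw [Subtype.dist_eq, Real.dist_eq]
      have hval : (auxg (fun i => if i < N then k.testBit (N - 1 - i) else false) : ℝ)
          = (k : ℝ) / 2 ^ N := auxG_dyadic N k hkN
      rw [hval]
      have habs : |r - (k:ℝ) / 2 ^ N| < (1/2) ^ N := by
        rw [abs_lt]
        constructor
        · have : (k:ℝ) / 2 ^ N ≤ r := by
            rw [div_le_iff₀ h2N]; exact hkle
          have hp : (0:ℝ) < (1/2)^N := by positivity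
          linarith
        · have : r < ((k:ℝ) + 1) / 2 ^ N := by
            rw [lt_div_iff₀ h2N]; exact hklt
          have h12 : ((1:ℝ)/2)^N = 1 / 2^N := by
            rw [div_pow, one_pow]
          rw [h12]
          calc r - (k:ℝ)/2^N < ((k:ℝ)+1)/2^N - (k:ℝ)/2^N := by linarith
            _ = 1 / 2^N := by ring
      exact lt_trans habs hN
  have : Set.range auxg = Set.univ := by
    rw [← hclosed.closure_eq]
    exact hdense.closure_eq
  intro x
  have := this ▸ Set.mem_univ x
  exact this

lemma aux_toZModPow_continuous (n : ℕ) :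
    Continuous (fun z : ℤ_[2] => PadicInt.toZModPow n z) := by
  have : IsLocallyConstant (fun z : ℤ_[2] => PadicInt.toZModPow n z) := by
    intro s
    rw [Metric.isOpen_iff]
    intro z hz
    refine ⟨(2:ℝ) ^ (-n : ℤ), by positivity, fun z' hz' => ?_⟩
    rw [Metric.mem_ball, dist_eq_norm] at hz'
    have hmem := (PadicInt.norm_le_pow_iff_mem_span_pow (z' - z) n).mp
      (le_of_lt (by exact_mod_cast hz'))
    rw [← PadicInt.ker_toZModPow, RingHom.mem_ker, map_sub, sub_eq_zero] at hmem
    simp only [Set.mem_preimage] at hz ⊢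
    rw [hmem]
    exact hz
  exact this.continuous

lemma aux_D_continuous (k : ℕ) :
    Continuous (fun z : ℤ_[2] => ((PadicInt.toZModPow (k+1) z).val).testBit k) := by
  exact (continuous_of_discreteTopology
    (f := fun m : ZMod (2 ^ (k+1)) => m.val.testBit k)).comp (aux_toZModPow_continuous (k+1))

lemma aux_D_nat (k m : ℕ) :
    ((PadicInt.toZModPow (p := 2) (k+1) (m : ℤ_[2])).val).testBit k = m.testBit k := by
  have h1 : PadicInt.toZModPow (p := 2) (k+1) (m : ℤ_[2]) = (m : ZMod (2 ^ (k+1))) := by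
    simp
  rw [h1, ZMod.val_natCast, Nat.testBit_mod_two_pow]
  simp



lemma aux_exists_padic (c : ℕ → Bool) :
    ∃ z : ℤ_[2], ∀ k, ((PadicInt.toZModPow (k+1) z).val).testBit k = c k := by
  set m : ℕ → ℕ := fun N => ∑ i ∈ Finset.range N, (c i).toNat * 2 ^ i with hm
  set u : ℕ → ℤ_[2] := fun N => ((m N : ℕ) : ℤ_[2]) with hu
  have hcauchy : CauchySeq u := by
    refine cauchySeq_of_le_geometric (1/2) 1 (by norm_num) (fun n => ?_)
    have hmn : m (n + 1) = m n + (c n).toNat * 2 ^ n := Finset.sum_range_succ _ _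
    rw [dist_eq_norm]
    have : u n - u (n+1) = -(((c n).toNat : ℤ_[2]) * ((2:ℕ) : ℤ_[2]) ^ n) := by
      rw [hu]
      simp only [hmn]
      push_cast
      ring
    rw [this, norm_neg, norm_mul, norm_pow]
    have h1 : ‖(((c n).toNat : ℕ) : ℤ_[2])‖ ≤ 1 := PadicInt.norm_le_one _
    have h2 : ‖((2:ℕ) : ℤ_[2])‖ = 2⁻¹ := by
      exact_mod_cast PadicInt.norm_p (p := 2)
    rw [h2]
    calc ‖(((c n).toNat : ℕ) : ℤ_[2])‖ * (2:ℝ)⁻¹ ^ n ≤ 1 * (2:ℝ)⁻¹ ^ n := by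
          apply mul_le_mul_of_nonneg_right h1 (by positivity)
      _ = 1 * (1/2) ^ n := by norm_num
  obtain ⟨z, hz⟩ := cauchySeq_tendsto_of_complete hcauchy
  refine ⟨z, fun k => ?_⟩
  have h1 : Filter.Tendsto (fun N => ((PadicInt.toZModPow (k+1) (u N)).val).testBit k)
      Filter.atTop (nhds (((PadicInt.toZModPow (k+1) z).val).testBit k)) :=
    ((aux_D_continuous k).tendsto z).comp hz
  have h2 : ∀ᶠ N in Filter.atTop,
      ((PadicInt.toZModPow (k+1) (u N)).val).testBit k = c k := by
    rw [Filter.eventually_atTop]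
    refine ⟨k + 1, fun N hN => ?_⟩
    rw [hu]
    simp only
    rw [aux_D_nat, hm]
    exact aux_testBit_sum c N k (by omega)
  have h3 : Filter.Tendsto (fun _ : ℕ => c k) Filter.atTop
      (nhds (((PadicInt.toZModPow (k+1) z).val).testBit k)) := h1.congr' (by filter_upwards [h2] with N hN using hN)
  exact (tendsto_nhds_unique h3 tendsto_const_nhds)

theorem exists_continuous_surjection_padicInt_two_to_hilbertCube :
    ∃ f : ℤ_[2] → (ℕ → Set.Icc (0 : ℝ) 1),
      Continuous f ∧ Function.Surjective f := by
  refine ⟨fun z n => auxg (fun i =>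
      ((PadicInt.toZModPow (Nat.pair n i + 1) z).val).testBit (Nat.pair n i)), ?_, ?_⟩
  · refine continuous_pi fun n => ?_
    exact (auxG_continuous.subtype_mk _).comp
      (continuous_pi fun i => aux_D_continuous (Nat.pair n i))
  · intro x
    choose b hb using fun n => auxg_surjective (x n)
    obtain ⟨z, hzd⟩ := aux_exists_padic (fun k => b (Nat.unpair k).1 (Nat.unpair k).2)
    refine ⟨z, funext fun n => ?_⟩
    have h1 : (fun i => ((PadicInt.toZModPow (Nat.pair n i + 1) z).val).testBit (Nat.pair n i))
        = b n := by
      funext i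
      rw [hzd (Nat.pair n i)]
      simp
    simp only [h1]
    exact hb n
end

section
/- A topological space X is regular Hausdorff (T3) and second-countable if and only if there exists a topological embedding of X into the Hilbert cube ℕ → [0,1]. (This is the topological form of the statement that a frame is regular with a countable basis if and only if it is a quotient of the Hilbert cube frame.) -/
open Filter Set Topology TopologicalSpace

/-- A T₃ second-countable space embeds into the Hilbert cube `ℕ → [0,1]`. -/
theorem exists_embedding_hilbertCube (X : Type*) [TopologicalSpace X] [T3Space X]
    [SecondCountableTopology X] :
    ∃ f : X → (ℕ → Set.Icc (0 : ℝ) 1), Topology.IsEmbedding f := by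
  rcases exists_countable_basis X with ⟨B, hBc, -, hB⟩
  let s : Set (Set X × Set X) := { UV ∈ B ×ˢ B | closure UV.1 ⊆ UV.2 }
  haveI : Encodable s := ((hBc.prod hBc).mono inter_subset_left).toEncodable
  have hd : ∀ UV : s, Disjoint (closure UV.1.1) UV.1.2ᶜ :=
    fun UV => disjoint_compl_right.mono_right (compl_subset_compl.2 UV.2.2)
  have : ∀ UV : s, ∃ f : C(X, ℝ),
      EqOn f 0 UV.1.1 ∧ EqOn f 1 UV.1.2ᶜ ∧ ∀ x, f x ∈ Icc (0:ℝ) 1 := by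
    intro UV
    rcases exists_continuous_zero_one_of_isClosed isClosed_closure
        (hB.isOpen UV.2.1.2).isClosed_compl (hd UV) with ⟨f, hf₀, hf₁, hf01⟩
    exact ⟨f, fun x hx => hf₀ (subset_closure hx), hf₁, hf01⟩
  choose f hf0 hf1 hf01 using this
  -- coordinate functions indexed by ℕ via decoding
  set g : ℕ → X → Set.Icc (0:ℝ) 1 := fun n x =>
    match Encodable.decode (α := s) n with
    | some UV => ⟨f UV x, hf01 UV x⟩
    | none => ⟨0, by norm_num⟩ with hg
  have hgc : ∀ n, Continuous (g n) := by
    intro n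
    rcases h : Encodable.decode (α := s) n with _ | UV <;> simp only [hg, h]
    · exact continuous_const
    · exact Continuous.subtype_mk (f UV).continuous _
  set F : X → ℕ → Set.Icc (0:ℝ) 1 := fun x n => g n x with hF
  have hFi : IsInducing F := by
    refine isInducing_iff_nhds.2 fun x => le_antisymm ?_ ?_
    · exact (continuous_pi fun n => hgc n).tendsto x |>.le_comap
    · refine (hB.nhds_hasBasis.ge_iff).2 ?_
      rintro V ⟨hVB, hxV⟩
      rcases hB.exists_closure_subset (hB.mem_nhds hVB hxV) with ⟨U, hUB, hxU, hUV⟩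
      set UV : ↥s := ⟨(U, V), ⟨hUB, hVB⟩, hUV⟩
      set n : ℕ := Encodable.encode UV
      have hdec : Encodable.decode (α := s) n = some UV := Encodable.encodek UV
      refine mem_comap.2 ⟨{p : ℕ → Set.Icc (0:ℝ) 1 | (p n : ℝ) < 1}, ?_, ?_⟩
      · refine IsOpen.mem_nhds ?_ ?_
        · exact isOpen_lt (continuous_subtype_val.comp (continuous_apply n)) continuous_const
        · show ((F x n : ℝ)) < 1
          have : (F x n : ℝ) = f UV x := by simp only [hF, hg, hdec]
          rw [this]
          have := hf0 UV hxU
          simp only [Pi.zero_apply] at this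
          rw [this]; norm_num
      · intro y hy
        by_contra hyV
        have h1 : (F y n : ℝ) = f UV y := by simp only [hF, hg, hdec]
        have h2 := hf1 UV hyV
        simp only [Pi.one_apply] at h2
        have : (F y n : ℝ) = 1 := by rw [h1, h2]
        simp only [Set.mem_preimage, Set.mem_setOf_eq, this] at hy
        exact lt_irrefl _ hy
  exact ⟨F, hFi.isEmbedding⟩

theorem t3_secondCountable_iff_embedding_hilbertCube
    (X : Type*) [TopologicalSpace X] :
    (T3Space X ∧ SecondCountableTopology X) ↔
      ∃ f : X → (ℕ → Set.Icc (0 : ℝ) 1), Topology.IsEmbedding f := by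
  constructor
  · rintro ⟨h1, h2⟩
    exact exists_embedding_hilbertCube X
  · rintro ⟨f, hf⟩
    exact ⟨hf.t3Space, hf.secondCountableTopology⟩
end

section
/- Every nonempty closed subset C of ℤ₂ is a retract of ℤ₂: there exists a continuous map r : ℤ₂ → ℤ₂ such that the range of r is C and r(x) = x for every x ∈ C. (This is the topological form of the statement that every non-trivial closed quotient of the frame of ℤ₂ is a retract of the frame of ℤ₂.) -/
open PadicInt

private lemma two_pow_dvd_iff_norm_le (a : ℤ_[2]) (n : ℕ) :
    (2:ℤ_[2])^n ∣ a ↔ ‖a‖ ≤ (2:ℝ) ^ (-n : ℤ) := by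
  rw [show ((2:ℝ)) = ((2:ℕ):ℝ) by norm_num, PadicInt.norm_le_pow_iff_mem_span_pow,
    Ideal.mem_span_singleton]
  norm_num

private lemma toZModPow_eq_of_dvd {a b : ℤ_[2]} (n : ℕ) (h : (2:ℤ_[2])^n ∣ a - b) :
    PadicInt.toZModPow n a = PadicInt.toZModPow n b := by
  have h0 : PadicInt.toZModPow n (a - b) = 0 := by
    rw [← RingHom.mem_ker, PadicInt.ker_toZModPow, Ideal.mem_span_singleton]
    simpa using h
  rw [map_sub, sub_eq_zero] at h0
  exact h0

private lemma dvd_of_toZModPow_eq {a b : ℤ_[2]} (n : ℕ)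
    (h : PadicInt.toZModPow n a = PadicInt.toZModPow n b) : (2:ℤ_[2])^n ∣ a - b := by
  have h0 : PadicInt.toZModPow n (a - b) = 0 := by rw [map_sub, h, sub_self]
  rw [← RingHom.mem_ker, PadicInt.ker_toZModPow, Ideal.mem_span_singleton] at h0
  simpa using h0

open Classical in
/-- The greedy nested family of subsets of `C`. -/
private noncomputable def Tset (C : Set ℤ_[2]) (x : ℤ_[2]) : ℕ → Set ℤ_[2]
  | 0 => C
  | n+1 =>
    if ({y ∈ Tset C x n | ((PadicInt.toZModPow (n+1)) (y - x)).val < 2^n}).Nonempty then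
      {y ∈ Tset C x n | ((PadicInt.toZModPow (n+1)) (y - x)).val < 2^n}
    else
      {y ∈ Tset C x n | ¬ ((PadicInt.toZModPow (n+1)) (y - x)).val < 2^n}

private lemma Tset_succ_subset (C : Set ℤ_[2]) (x : ℤ_[2]) (n : ℕ) :
    Tset C x (n+1) ⊆ Tset C x n := by
  rw [Tset]
  split <;> exact fun y hy => hy.1

private lemma Tset_subset (C : Set ℤ_[2]) (x : ℤ_[2]) (n : ℕ) : Tset C x n ⊆ C := by
  induction n with
  | zero => rw [Tset]
  | succ n ih => exact (Tset_succ_subset C x n).trans ih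

private lemma Tset_nonempty (C : Set ℤ_[2]) (hC : C.Nonempty) (x : ℤ_[2]) (n : ℕ) :
    (Tset C x n).Nonempty := by
  induction n with
  | zero => rwa [Tset]
  | succ n ih =>
    rw [Tset]
    split
    · assumption
    · rename_i h
      obtain ⟨y, hy⟩ := ih
      refine ⟨y, hy, fun hlt => h ⟨y, hy, hlt⟩⟩

private lemma Tset_mem_self (C : Set ℤ_[2]) {x : ℤ_[2]} (hx : x ∈ C) (n : ℕ) :
    x ∈ Tset C x n := by
  induction n with
  | zero => rwa [Tset]
  | succ n ih =>
    have hx0 : ((PadicInt.toZModPow (n+1)) (x - x)).val < 2^n := by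
      simp [ZMod.val_zero, Nat.pow_pos]
    rw [Tset]
    split
    · exact ⟨ih, hx0⟩
    · rename_i h
      exact absurd ⟨x, ih, hx0⟩ h

/-- Sets defined by conditions on `toZModPow m (y - x)` are open. -/
private lemma isOpen_digit_set (x : ℤ_[2]) (n : ℕ) (P : ZMod (2^(n+1)) → Prop) :
    IsOpen {y : ℤ_[2] | P ((PadicInt.toZModPow (n+1)) (y - x))} := by
  rw [Metric.isOpen_iff]
  intro y hy
  refine ⟨(2:ℝ) ^ (-(n:ℤ)), by positivity, fun z hz => ?_⟩
  have hdvd : (2:ℤ_[2])^(n+1) ∣ z - y := by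
    rw [two_pow_dvd_iff_norm_le]
    have hiff := PadicInt.norm_le_pow_iff_norm_lt_pow_add_one (z - y) (-((n:ℤ)+1))
    have h2 : ((2:ℕ):ℝ) = (2:ℝ) := by norm_num
    rw [h2] at hiff
    have hstep : -((n:ℤ)+1) + 1 = -(n:ℤ) := by ring
    rw [hstep] at hiff
    have hzy : ‖z - y‖ < (2:ℝ) ^ (-(n:ℤ)) := by simpa [dist_eq_norm] using hz
    have hle := hiff.mpr hzy
    exact_mod_cast hle
  have : (2:ℤ_[2])^(n+1) ∣ (z - x) - (y - x) := by
    have : (z - x) - (y - x) = z - y := by ring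
    rw [this]; exact hdvd
  have heq := toZModPow_eq_of_dvd (n+1) this
  show P _
  rw [heq]
  exact hy

private lemma isClosed_digit_set (x : ℤ_[2]) (n : ℕ) (P : ZMod (2^(n+1)) → Prop) :
    IsClosed {y : ℤ_[2] | P ((PadicInt.toZModPow (n+1)) (y - x))} := by
  have h := isOpen_digit_set x n (fun a => ¬ P a)
  have h2 : {y : ℤ_[2] | P ((PadicInt.toZModPow (n+1)) (y - x))}
      = {y : ℤ_[2] | ¬ P ((PadicInt.toZModPow (n+1)) (y - x))}ᶜ := by
    ext y; simp
  rw [h2]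
  exact h.isClosed_compl

private lemma Tset_isClosed (C : Set ℤ_[2]) (hclosed : IsClosed C) (x : ℤ_[2]) (n : ℕ) :
    IsClosed (Tset C x n) := by
  induction n with
  | zero => rwa [Tset]
  | succ n ih =>
    rw [Tset]
    split
    · exact ih.inter (isClosed_digit_set x n (fun a => a.val < 2^n))
    · exact ih.inter (isClosed_digit_set x n (fun a => ¬ a.val < 2^n))

private lemma Tset_diam (C : Set ℤ_[2]) (x : ℤ_[2]) (n : ℕ) :
    ∀ y ∈ Tset C x n, ∀ z ∈ Tset C x n, (2:ℤ_[2])^n ∣ y - z := by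
  induction n with
  | zero => intro y _ z _; simpa using dvd_refl _
  | succ n ih =>
    intro y hy z hz
    have hyz : (2:ℤ_[2])^n ∣ y - z :=
      ih y (Tset_succ_subset C x n hy) z (Tset_succ_subset C x n hz)
    set a := (PadicInt.toZModPow (n+1)) (y - x) with ha
    set b := (PadicInt.toZModPow (n+1)) (z - x) with hb
    -- a and b agree after casting down to ZMod (2^n)
    have hcast : (ZMod.castHom (pow_dvd_pow 2 (Nat.le_succ n)) (ZMod (2^n))) a
        = (ZMod.castHom (pow_dvd_pow 2 (Nat.le_succ n)) (ZMod (2^n))) b := by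
      have hcomp := PadicInt.zmod_cast_comp_toZModPow (p := 2) n (n+1) (Nat.le_succ n)
      have h1 : (ZMod.castHom (pow_dvd_pow 2 (Nat.le_succ n)) (ZMod (2^n))) a
          = PadicInt.toZModPow n (y - x) := by
        rw [ha, ← RingHom.comp_apply, hcomp]
      have h2 : (ZMod.castHom (pow_dvd_pow 2 (Nat.le_succ n)) (ZMod (2^n))) b
          = PadicInt.toZModPow n (z - x) := by
        rw [hb, ← RingHom.comp_apply, hcomp]
      rw [h1, h2]
      apply toZModPow_eq_of_dvd
      have : (y - x) - (z - x) = y - z := by ring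
      rw [this]; exact hyz
    -- hence vals agree mod 2^n
    haveI : NeZero (2^(n+1)) := ⟨by positivity⟩
    haveI : NeZero (2^n) := ⟨by positivity⟩
    have hvmod : a.val % 2^n = b.val % 2^n := by
      have h1 : ((a.val : ℕ) : ZMod (2^n)) = ((b.val : ℕ) : ZMod (2^n)) := by
        rw [ZMod.natCast_val, ZMod.natCast_val]
        exact hcast
      rwa [ZMod.natCast_eq_natCast_iff'] at h1
    -- both y and z are in the same branch, so the top bits of a, b agree
    have hbits : (a.val < 2^n ∧ b.val < 2^n) ∨ (¬ a.val < 2^n ∧ ¬ b.val < 2^n) := by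
      rw [Tset] at hy hz
      revert hy hz
      split
      · intro hy hz; exact Or.inl ⟨hy.2, hz.2⟩
      · intro hy hz; exact Or.inr ⟨hy.2, hz.2⟩
    have hval : a.val = b.val := by
      have hav := ZMod.val_lt a
      have hbv := ZMod.val_lt b
      have h2 : (2:ℕ)^(n+1) = 2^n + 2^n := by ring
      rcases hbits with ⟨h1, h2'⟩ | ⟨h1, h2'⟩
      · rwa [Nat.mod_eq_of_lt h1, Nat.mod_eq_of_lt h2'] at hvmod
      · push_neg at h1 h2'
        have ha' : a.val % 2^n = a.val - 2^n := by
          rw [Nat.mod_eq_sub_mod h1, Nat.mod_eq_of_lt (by omega)]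
        have hb' : b.val % 2^n = b.val - 2^n := by
          rw [Nat.mod_eq_sub_mod h2', Nat.mod_eq_of_lt (by omega)]
        rw [ha', hb'] at hvmod
        omega
    have hab : a = b := by
      have := congrArg (Nat.cast : ℕ → ZMod (2^(n+1))) hval
      rwa [ZMod.natCast_val, ZMod.natCast_val, ZMod.cast_id, ZMod.cast_id] at this
    have := dvd_of_toZModPow_eq (n+1) (ha ▸ hb ▸ hab)
    have heq : (y - x) - (z - x) = y - z := by ring
    rwa [heq] at this

private lemma Tset_local (C : Set ℤ_[2]) {x x' : ℤ_[2]} (n : ℕ)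
    (h : (2:ℤ_[2])^n ∣ x - x') : Tset C x n = Tset C x' n := by
  classical
  induction n with
  | zero => rw [Tset, Tset]
  | succ n ih =>
    have hn : (2:ℤ_[2])^n ∣ x - x' := dvd_trans (pow_dvd_pow 2 (Nat.le_succ n)) h
    have hT := ih hn
    have hdig : ∀ y : ℤ_[2], (PadicInt.toZModPow (n+1)) (y - x)
        = (PadicInt.toZModPow (n+1)) (y - x') := by
      intro y
      apply toZModPow_eq_of_dvd
      have : (y - x) - (y - x') = -(x - x') := by ring
      rw [this]
      exact Dvd.dvd.neg_right h
    have hset1 : {y | y ∈ Tset C x' n ∧ ((PadicInt.toZModPow (n+1)) (y - x)).val < 2^n}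
        = {y | y ∈ Tset C x' n ∧ ((PadicInt.toZModPow (n+1)) (y - x')).val < 2^n} := by
      ext y; simp only [Set.mem_setOf_eq, hdig y]
    have hset2 : {y | y ∈ Tset C x' n ∧ ¬ ((PadicInt.toZModPow (n+1)) (y - x)).val < 2^n}
        = {y | y ∈ Tset C x' n ∧ ¬ ((PadicInt.toZModPow (n+1)) (y - x')).val < 2^n} := by
      ext y; simp only [Set.mem_setOf_eq, hdig y]
    rw [Tset, Tset, hT]
    exact if_congr (by rw [hset1]) hset1 hset2

private lemma eq_of_forall_two_pow_dvd {a b : ℤ_[2]} (h : ∀ n : ℕ, (2:ℤ_[2])^n ∣ a - b) :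
    a = b := by
  by_contra hne
  have hpos : 0 < ‖a - b‖ := by
    rw [norm_pos_iff]
    exact sub_ne_zero.mpr hne
  obtain ⟨k, hk⟩ := PadicInt.exists_pow_neg_lt 2 hpos
  have := (two_pow_dvd_iff_norm_le (a - b) k).mp (h k)
  have h2 : ((2:ℕ):ℝ) = (2:ℝ) := by norm_num
  rw [h2] at hk
  linarith

theorem closed_subset_retract_of_padicInt_two
    (C : Set ℤ_[2]) (hC : C.Nonempty) (hclosed : IsClosed C) :
    ∃ r : ℤ_[2] → ℤ_[2], Continuous r ∧ Set.range r = C ∧ ∀ x ∈ C, r x = x := by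
  have hinter : ∀ x : ℤ_[2], (⋂ n, Tset C x n).Nonempty := by
    intro x
    apply IsCompact.nonempty_iInter_of_sequence_nonempty_isCompact_isClosed
    · exact fun n => Tset_succ_subset C x n
    · exact fun n => Tset_nonempty C hC x n
    · exact (Tset_isClosed C hclosed x 0).isCompact
    · exact fun n => Tset_isClosed C hclosed x n
  choose r hr using hinter
  have hrmem : ∀ x n, r x ∈ Tset C x n := fun x n => Set.mem_iInter.mp (hr x) n
  have hrC : ∀ x, r x ∈ C := fun x => Tset_subset C x 0 (hrmem x 0)
  have hfix : ∀ x ∈ C, r x = x := by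
    intro x hx
    apply eq_of_forall_two_pow_dvd
    intro n
    exact Tset_diam C x n (r x) (hrmem x n) x (Tset_mem_self C hx n)
  refine ⟨r, ?_, ?_, hfix⟩
  · rw [Metric.continuous_iff]
    intro x ε hε
    obtain ⟨k, hk⟩ := PadicInt.exists_pow_neg_lt 2 hε
    refine ⟨(2:ℝ) ^ (-(k:ℤ)), by positivity, fun y hy => ?_⟩
    have hdvd : (2:ℤ_[2])^k ∣ y - x := by
      rw [two_pow_dvd_iff_norm_le]
      rw [dist_eq_norm] at hy
      exact le_of_lt hy
    have hTeq : Tset C y k = Tset C x k := Tset_local C k hdvd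
    have h1 : r y ∈ Tset C x k := hTeq ▸ hrmem y k
    have h2 : (2:ℤ_[2])^k ∣ r y - r x := Tset_diam C x k (r y) h1 (r x) (hrmem x k)
    rw [dist_eq_norm]
    calc ‖r y - r x‖ ≤ (2:ℝ) ^ (-(k:ℤ)) := (two_pow_dvd_iff_norm_le _ k).mp h2
      _ < ε := by
        have h2' : ((2:ℕ):ℝ) = (2:ℝ) := by norm_num
        rwa [h2'] at hk
  · ext c
    constructor
    · rintro ⟨x, rfl⟩; exact hrC x
    · intro hc; exact ⟨c, hfix c hc⟩
end

section
/- Hausdorff–Alexandroff theorem: for every nonempty compact metric space X there exists a continuous surjection f : ℤ₂ → X. (This is the topological form of the paper's main theorem that for every compact metrizable frame L there is an injective frame homomorphism from L into the frame of ℤ₂.) -/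
open Filter Topology

/-! ### Generic continuity helpers -/

lemma HA.locconst_continuous {α Y : Type*} [PseudoMetricSpace α] [TopologicalSpace Y]
    {f : α → Y} (h : ∀ x, ∃ ε > 0, ∀ y, dist y x < ε → f y = f x) : Continuous f := by
  rw [continuous_iff_continuousAt]
  intro x
  obtain ⟨ε, hε, hx⟩ := h x
  have hev : ∀ᶠ y in 𝓝 x, f y = f x := by
    filter_upwards [Metric.ball_mem_nhds x hε] with y hy using hx y hy
  exact Filter.Tendsto.congr' (by filter_upwards [hev] with y hy using hy.symm)
    tendsto_const_nhds

lemma HA.finitedep_continuous {X : Type*} [TopologicalSpace X] (n : ℕ) (f : (ℕ → ℕ) → X)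
    (h : ∀ σ τ : ℕ → ℕ, (∀ i ≤ n, σ i = τ i) → f σ = f τ) : Continuous f := by
  have hf : f = (fun s : Fin (n+1) → ℕ => f (fun i => if h : i < n + 1 then s ⟨i, h⟩ else 0)) ∘
      (fun σ (i : Fin (n+1)) => σ i) := by
    funext σ
    exact h _ _ (fun i hi => by simp [dif_pos (Nat.lt_succ_of_le hi)]; intro h'; omega)
  rw [hf]
  exact continuous_of_discreteTopology.comp (continuous_pi fun i => continuous_apply _)

/-! ### Nat binary digit fact -/

lemma HA.nat_digit_sum (a : ℕ) : ∀ m, (∑ i ∈ Finset.range m, (a / 2^i % 2) * 2^i) = a % 2^m := by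
  intro m
  induction m with
  | zero => simp [Nat.mod_one]
  | succ m ih =>
    rw [Finset.sum_range_succ, ih, pow_succ, Nat.mod_mul]
    ring

namespace HA

/-! ### 2-adic digits -/

lemma two_zpow_eq (n : ℕ) : ((2:ℝ))^(-(n:ℤ)) = (2⁻¹:ℝ)^n := by
  rw [zpow_neg, inv_pow, zpow_natCast]

lemma appr_unique (x : ℤ_[2]) (n a : ℕ) (ha : a < 2^n)
    (h : ‖x - a‖ ≤ (2:ℝ)^(-(n:ℤ))) : x.appr n = a := by
  have h1 : ‖x - (x.appr n : ℤ_[2])‖ ≤ ((2:ℕ):ℝ)^(-(n:ℤ)) :=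
    (PadicInt.norm_le_pow_iff_mem_span_pow _ n).mpr (PadicInt.appr_spec n x)
  have h2 : (((a:ℤ) - (x.appr n : ℤ) : ℤ) : ℤ_[2]) = (x - (x.appr n : ℤ_[2])) - (x - (a:ℤ_[2])) := by
    push_cast; ring
  have h3 : ‖(((a:ℤ) - (x.appr n : ℤ) : ℤ) : ℤ_[2])‖ ≤ ((2:ℕ):ℝ)^(-(n:ℤ)) := by
    rw [h2, sub_eq_add_neg]
    refine le_trans (PadicInt.nonarchimedean _ _) (max_le h1 ?_)
    rw [norm_neg]; exact_mod_cast h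
  have h4 : ((2:ℤ)^n) ∣ ((a:ℤ) - (x.appr n : ℤ)) := by
    have := (PadicInt.norm_int_le_pow_iff_dvd (p := 2) (k := (a:ℤ) - (x.appr n : ℤ)) (n := n)).mp
      (by exact_mod_cast h3)
    exact_mod_cast this
  have h5 : |(a:ℤ) - (x.appr n : ℤ)| < 2^n := by
    have hb := PadicInt.appr_lt x n
    have ha' : (a:ℤ) < 2^n := by exact_mod_cast ha
    have hb' : ((x.appr n : ℕ) : ℤ) < 2^n := by exact_mod_cast hb
    have h0a : (0:ℤ) ≤ (a:ℤ) := Int.natCast_nonneg a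
    have h0b : (0:ℤ) ≤ ((x.appr n : ℕ) : ℤ) := Int.natCast_nonneg _
    rw [abs_lt]
    omega
  have h6 := Int.eq_zero_of_abs_lt_dvd h4 h5
  omega

/-- `j`-th binary digit of a 2-adic integer. -/
noncomputable def dig (x : ℤ_[2]) (j : ℕ) : ℕ := x.appr (j+1) / 2^j % 2

lemma appr_loc (x y : ℤ_[2]) (n : ℕ) (h : ‖x - y‖ ≤ (2:ℝ)^(-(n:ℤ))) :
    x.appr n = y.appr n := by
  apply appr_unique x n (y.appr n) (PadicInt.appr_lt y n)
  have h1 : ‖y - (y.appr n : ℤ_[2])‖ ≤ ((2:ℕ):ℝ)^(-(n:ℤ)) :=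
    (PadicInt.norm_le_pow_iff_mem_span_pow _ n).mpr (PadicInt.appr_spec n y)
  have h2 : x - (y.appr n : ℤ_[2]) = (x - y) + (y - (y.appr n : ℤ_[2])) := by ring
  rw [h2]
  refine le_trans (PadicInt.nonarchimedean _ _) (max_le h ?_)
  exact_mod_cast h1

lemma dig_loc (x y : ℤ_[2]) (j : ℕ) (h : ‖x - y‖ ≤ (2:ℝ)^(-(((j+1):ℕ):ℤ))) :
    dig x j = dig y j := by
  unfold dig
  rw [appr_loc x y (j+1) h]

lemma exists_padic_of_digits (b : ℕ → ℕ) (hb : ∀ j, b j ≤ 1) :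
    ∃ z : ℤ_[2], ∀ j, dig z j = b j := by
  classical
  set Nsum : ℕ → ℕ := fun n => ∑ i ∈ Finset.range n, b i * 2^i with hNsum
  have hNlt : ∀ n, Nsum n < 2^n := by
    intro n
    induction n with
    | zero => simp [hNsum]
    | succ n ih =>
      have h1 : b n * 2^n ≤ 1 * 2^n := Nat.mul_le_mul_right _ (hb n)
      have h2 : Nsum (n+1) = Nsum n + b n * 2^n := Finset.sum_range_succ _ _
      have h3 : (2:ℕ)^(n+1) = 2^n * 2 := pow_succ 2 n
      omega
  set s : ℕ → ℤ_[2] := fun n => ((Nsum n : ℕ) : ℤ_[2]) with hs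
  have hterm : ∀ m, ‖s (m+1) - s m‖ ≤ (2:ℝ)^(-(m:ℤ)) := by
    intro m
    have h2 : s (m+1) - s m = (b m : ℤ_[2]) * ((2:ℕ):ℤ_[2])^m := by
      simp only [hs]
      rw [show Nsum (m+1) = Nsum m + b m * 2^m from Finset.sum_range_succ _ _]
      push_cast
      ring
    rw [h2, norm_mul]
    calc ‖(b m : ℤ_[2])‖ * ‖((2:ℕ):ℤ_[2])^m‖ ≤ 1 * ‖((2:ℕ):ℤ_[2])^m‖ := by
          gcongr; exact PadicInt.norm_le_one _
      _ = ‖((2:ℕ):ℤ_[2])^m‖ := one_mul _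
      _ ≤ (2:ℝ)^(-(m:ℤ)) := by
          rw [PadicInt.norm_p_pow (p := 2) m]
          push_cast
          exact le_rfl
  have hdist : ∀ n m, n ≤ m → ‖s m - s n‖ ≤ (2:ℝ)^(-(n:ℤ)) := by
    intro n m hnm
    induction m with
    | zero =>
      have hn0 : n = 0 := Nat.le_zero.mp hnm
      subst hn0; simp
    | succ m ih =>
      rcases Nat.lt_or_ge n (m+1) with h | h
      · have hnm' : n ≤ m := Nat.lt_succ_iff.mp h
        have h1 : s (m+1) - s n = (s (m+1) - s m) + (s m - s n) := by ring
        rw [h1]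
        refine le_trans (PadicInt.nonarchimedean _ _) (max_le ?_ (ih hnm'))
        refine le_trans (hterm m) ?_
        apply zpow_le_zpow_right₀ (by norm_num)
        omega
      · have hn1 : n = m + 1 := le_antisymm hnm h
        subst hn1; simp
        positivity
  have hc : CauchySeq s := by
    apply cauchySeq_of_le_geometric (2⁻¹ : ℝ) 1 (by norm_num)
    intro n
    rw [dist_comm, dist_eq_norm, one_mul, ← two_zpow_eq]
    exact hdist n (n+1) (Nat.le_succ n)
  obtain ⟨z, hz⟩ := cauchySeq_tendsto_of_complete hc
  have hzn : ∀ n, ‖z - s n‖ ≤ (2:ℝ)^(-(n:ℤ)) := by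
    intro n
    have ht : Tendsto (fun m => dist (s m) (s n)) atTop (𝓝 (dist z (s n))) :=
      hz.dist tendsto_const_nhds
    have hle : dist z (s n) ≤ (2:ℝ)^(-(n:ℤ)) := by
      refine le_of_tendsto ht ?_
      rw [eventually_atTop]
      exact ⟨n, fun m hm => by rw [dist_eq_norm]; exact hdist n m hm⟩
    rwa [dist_eq_norm] at hle
  refine ⟨z, fun j => ?_⟩
  have happr : z.appr (j+1) = Nsum (j+1) :=
    appr_unique z (j+1) (Nsum (j+1)) (hNlt (j+1)) (hzn (j+1))
  unfold dig
  rw [happr, show Nsum (j+1) = Nsum j + b j * 2^j from Finset.sum_range_succ _ _,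
    Nat.add_mul_div_right _ _ (pow_pos two_pos j), Nat.div_eq_of_lt (hNlt j)]
  have := hb j
  omega

/-! ### The digit-extraction map `g : ℤ₂ → (ℕ → ℕ)` -/

lemma exists_g (k : ℕ → ℕ) : ∃ g : ℤ_[2] → ℕ → ℕ, Continuous g ∧
    ∀ σ : ℕ → ℕ, (∀ n, σ n < 2 ^ k n) → ∃ z, g z = σ := by
  classical
  refine ⟨fun z n => ∑ i ∈ Finset.range (k n), dig z (Nat.pair n i) * 2^i, ?_, ?_⟩
  · apply continuous_pi
    intro n
    apply locconst_continuous
    intro x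
    set M : ℕ := (Finset.range (k n)).sup (fun i => Nat.pair n i + 1) with hM
    refine ⟨(2:ℝ)^(-(M:ℤ)), by positivity, fun y hy => ?_⟩
    refine Finset.sum_congr rfl (fun i hi => ?_)
    have hiM : Nat.pair n i + 1 ≤ M :=
      Finset.le_sup (f := fun i => Nat.pair n i + 1) hi
    have hnorm : ‖y - x‖ ≤ (2:ℝ)^(-(((Nat.pair n i + 1):ℕ):ℤ)) := by
      rw [← dist_eq_norm]
      refine le_trans hy.le ?_
      apply zpow_le_zpow_right₀ (by norm_num)
      omega
    rw [dig_loc y x _ hnorm]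
  · intro σ hσ
    obtain ⟨z, hz⟩ := exists_padic_of_digits
      (fun j => σ (Nat.unpair j).1 / 2^((Nat.unpair j).2) % 2)
      (fun j => Nat.le_of_lt_succ (Nat.mod_lt _ (by norm_num)))
    refine ⟨z, funext fun n => ?_⟩
    have : ∀ i, dig z (Nat.pair n i) = σ n / 2^i % 2 := by
      intro i
      rw [hz (Nat.pair n i), Nat.unpair_pair]
    simp only [this]
    rw [nat_digit_sum, Nat.mod_eq_of_lt (hσ n)]

/-! ### The scheme map `F : (ℕ → ℕ) → X` -/

noncomputable def HAv {X : Type*} [MetricSpace X] (u : ℕ → X) : ℕ → (ℕ → ℕ) → X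
  | 0 => fun σ => u (σ 0)
  | (n+1) => fun σ =>
      if dist (u (σ (n+1))) (HAv u n σ) ≤ 3/2 * (2⁻¹:ℝ)^n then u (σ (n+1)) else HAv u n σ

lemma exists_F (X : Type*) [MetricSpace X] [CompactSpace X] [Nonempty X] :
    ∃ (k : ℕ → ℕ) (F : (ℕ → ℕ) → X), Continuous F ∧
      ∀ x, ∃ σ : ℕ → ℕ, (∀ n, σ n < k n) ∧ F σ = x := by
  classical
  obtain ⟨u, hu⟩ := TopologicalSpace.exists_dense_seq X
  -- finite nets
  have hnet : ∀ n : ℕ, ∃ k : ℕ, ∀ x : X, ∃ i, i < k ∧ dist x (u i) < (2⁻¹:ℝ)^n := by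
    intro n
    have hcov : (Set.univ : Set X) ⊆ ⋃ i, Metric.ball (u i) ((2⁻¹:ℝ)^n) := by
      intro x _
      obtain ⟨i, hi⟩ := Metric.denseRange_iff.1 hu x ((2⁻¹:ℝ)^n) (by positivity)
      exact Set.mem_iUnion.mpr ⟨i, by simpa [Metric.mem_ball, dist_comm] using hi⟩
    obtain ⟨t, ht⟩ := isCompact_univ.elim_finite_subcover _
      (fun i => Metric.isOpen_ball) hcov
    refine ⟨t.sup id + 1, fun x => ?_⟩
    have hx := ht (Set.mem_univ x)
    simp only [Set.mem_iUnion] at hx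
    obtain ⟨i, hit, hxi⟩ := hx
    exact ⟨i, Nat.lt_succ_of_le (Finset.le_sup (f := id) hit),
      by simpa [Metric.mem_ball, dist_comm] using hxi⟩
  choose k hk using hnet
  have hdep : ∀ n (σ τ : ℕ → ℕ), (∀ i ≤ n, σ i = τ i) → HAv u n σ = HAv u n τ := by
    intro n
    induction n with
    | zero => intro σ τ h; simp only [HAv]; rw [h 0 le_rfl]
    | succ n ih =>
      intro σ τ h
      simp only [HAv]
      rw [ih σ τ (fun i hi => h i (le_trans hi (Nat.le_succ n))), h (n+1) le_rfl]
  have hstep : ∀ n (σ : ℕ → ℕ), dist (HAv u (n+1) σ) (HAv u n σ) ≤ 3/2 * (2⁻¹:ℝ)^n := by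
    intro n σ
    simp only [HAv]
    split_ifs with h
    · exact h
    · simp only [dist_self]
      positivity
  have hcont : ∀ n, Continuous (HAv u n) := fun n => finitedep_continuous n _ (hdep n)
  have hcauchy : ∀ σ : ℕ → ℕ, CauchySeq (fun n => HAv u n σ) := by
    intro σ
    apply cauchySeq_of_le_geometric (2⁻¹:ℝ) (3/2) (by norm_num)
    intro n
    rw [dist_comm]
    exact hstep n σ
  choose F hF using fun σ => cauchySeq_tendsto_of_complete (hcauchy σ)
  have hFd : ∀ (σ : ℕ → ℕ) n, dist (HAv u n σ) (F σ) ≤ 3/2 * (2⁻¹:ℝ)^n / (1 - 2⁻¹) := by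
    intro σ n
    exact dist_le_of_le_geometric_of_tendsto (2⁻¹:ℝ) (3/2) (by norm_num)
      (fun n => by rw [dist_comm]; exact hstep n σ) (hF σ) n
  have h0 : Tendsto (fun n : ℕ => 3/2 * (2⁻¹:ℝ)^n / (1 - 2⁻¹)) atTop (𝓝 0) := by
    have h1 := tendsto_pow_atTop_nhds_zero_of_lt_one (r := (2⁻¹:ℝ)) (by norm_num) (by norm_num)
    have h2 := (h1.const_mul (3/2:ℝ)).div_const (1 - 2⁻¹)
    simpa using h2
  have hunif : TendstoUniformly (fun n σ => HAv u n σ) F atTop := by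
    rw [Metric.tendstoUniformly_iff]
    intro ε hε
    filter_upwards [h0 (Iio_mem_nhds hε)] with n hn σ
    calc dist (F σ) (HAv u n σ) = dist (HAv u n σ) (F σ) := dist_comm _ _
      _ ≤ _ := hFd σ n
      _ < ε := hn
  refine ⟨k, F, hunif.continuous (Filter.Eventually.of_forall hcont).frequently, ?_⟩
  intro x
  choose σ hσ1 hσ2 using fun n => hk n x
  have hclaim : ∀ n, HAv u n σ = u (σ n) := by
    intro n
    induction n with
    | zero => simp [HAv]
    | succ n ih =>
      simp only [HAv]
      rw [ih, if_pos]
      have h1 := hσ2 (n+1)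
      have h2 := hσ2 n
      have hp : (2⁻¹:ℝ)^(n+1) = (2⁻¹)^n * 2⁻¹ := pow_succ _ _
      have htri := dist_triangle (u (σ (n+1))) x (u (σ n))
      have hcomm : dist (u (σ (n+1))) x = dist x (u (σ (n+1))) := dist_comm _ _
      linarith
  have hbd : ∀ n, dist (HAv u n σ) x ≤ (2⁻¹:ℝ)^n := by
    intro n
    rw [hclaim n, dist_comm]
    exact (hσ2 n).le
  have hlim : Tendsto (fun n => HAv u n σ) atTop (𝓝 x) := by
    rw [tendsto_iff_dist_tendsto_zero]
    exact squeeze_zero (fun n => dist_nonneg) hbd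
      (tendsto_pow_atTop_nhds_zero_of_lt_one (by norm_num) (by norm_num))
  exact ⟨σ, hσ1, tendsto_nhds_unique (hF σ) hlim⟩

end HA

theorem hausdorff_alexandroff
    (X : Type*) [MetricSpace X] [CompactSpace X] [Nonempty X] :
    ∃ f : ℤ_[2] → X, Continuous f ∧ Function.Surjective f := by
  obtain ⟨k, F, hFc, hFs⟩ := HA.exists_F X
  obtain ⟨g, hgc, hgs⟩ := HA.exists_g k
  refine ⟨F ∘ g, hFc.comp hgc, fun x => ?_⟩
  obtain ⟨σ, hσb, hσF⟩ := hFs x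
  obtain ⟨z, hz⟩ := hgs σ (fun n => lt_trans (hσb n) Nat.lt_two_pow_self)
  exact ⟨z, by rw [Function.comp_apply, hz, hσF]⟩
end
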